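/- Let n ≥ 1, let Λ ⊆ ℤ^n be any subset and let ν : ℤ^n → ℤ be any function. Then the set P(Λ,ν) ⊆ ℚ_p^{n+1} is a Borel set and its Haar measure satisfies μ(P(Λ,ν)) = ∑_{λ ∈ Λ} p^{ν(λ)}, an identity in [0,∞] (the sum being the unconditional sum of the nonnegative terms p^{ν(λ)} over λ ∈ Λ). -/

import Mathlib

open MeasureTheory ENNReal

namespace KZ

variable (p : ℕ) [Fact p.Prime]

noncomputable instance : MeasurableSpace ℚ_[p] := borel _
instance : BorelSpace ℚ_[p] := ⟨rfl⟩

/-- `ℚ_p^n`. -/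
abbrev QV (n : ℕ) := Fin n → ℚ_[p]

/-- The closed unit polydisc `ℤ_p^n ⊆ ℚ_p^n`. -/
def disc (n : ℕ) : Set (QV p n) := {x | ∀ i, ‖x i‖ ≤ 1}

/-- `ac_ℓ(x) = 1`: `x` is nonzero and the unit `x·p^{-v(x)}` is congruent to `1` mod `p^ℓ`. -/
def acIsOne (ℓ : ℕ) (x : ℚ_[p]) : Prop :=
  x ≠ 0 ∧ ‖x * (p : ℚ_[p]) ^ (-x.valuation) - 1‖ ≤ (p : ℝ) ^ (-(ℓ : ℤ))

/-- The coordinatewise valuation vector. -/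
noncomputable def vvec {n : ℕ} (x : QV p n) : Fin n → ℤ := fun i => (x i).valuation

/-- The set `P(Λ) ⊆ ℚ_p^n` attached to `Λ ⊆ ℤ^n`: all coordinates have `ac = 1` and the
valuation vector lies in `Λ`. -/
def Pset0 {n : ℕ} (Λ : Set (Fin n → ℤ)) : Set (QV p n) :=
  {x | (∀ i, acIsOne p 1 (x i)) ∧ vvec p x ∈ Λ}

/-- The set `P(Λ, ν) ⊆ ℚ_p^{n+1}`: pairs `(x, y)` with `x ∈ P(Λ)`, `ac(y) = 1` and
`v(y) = -n - 1 - ν(v(x)) - ∑ v(x_i)`. -/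
def Pnu0 {n : ℕ} (Λ : Set (Fin n → ℤ)) (ν : (Fin n → ℤ) → ℤ) : Set (QV p (n + 1)) :=
  {z | (∀ i : Fin n, acIsOne p 1 (z (Fin.castSucc i))) ∧
    vvec p (z ∘ Fin.castSucc) ∈ Λ ∧
    acIsOne p 1 (z (Fin.last n)) ∧
    (z (Fin.last n)).valuation =
      -(n : ℤ) - 1 - ν (vvec p (z ∘ Fin.castSucc))
        - ∑ i : Fin n, (z (Fin.castSucc i)).valuation}

/-! ### Auxiliary material -/

instance : TopologicalSpace.SeparableSpace ℚ_[p] := by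
  have : DenseRange ((↑) : ℚ → ℚ_[p]) := by
    rw [Metric.denseRange_iff]
    intro x r hr
    obtain ⟨q, hq⟩ := Padic.rat_dense (p := p) x hr
    exact ⟨q, by rwa [dist_eq_norm]⟩
  exact ⟨⟨Set.range ((↑) : ℚ → ℚ_[p]), Set.countable_range _, this⟩⟩

/-- The closed ball of radius `p^{-a}` about `0` in `ℚ_p`. -/
noncomputable def cb (a : ℤ) : Set ℚ_[p] := Metric.closedBall 0 ((p : ℝ) ^ (-a))

variable {p}

lemma hp1 : 1 < (p : ℝ) := by exact_mod_cast (Fact.out : p.Prime).one_lt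
lemma hp0 : 0 < (p : ℝ) := lt_trans one_pos hp1

lemma mem_cb {a : ℤ} {x : ℚ_[p]} : x ∈ cb p a ↔ ‖x‖ ≤ (p : ℝ) ^ (-a) := by
  simp [cb, Metric.mem_closedBall, dist_zero_right]

/-- every point of `cb a` is within `p^{-(a+1)}` of some `k * p^a`, `k < p`. -/
lemma decomp {a : ℤ} {x : ℚ_[p]} (hx : ‖x‖ ≤ (p : ℝ) ^ (-a)) :
    ∃ k : Fin p, ‖x - (k : ℚ_[p]) * (p : ℚ_[p]) ^ a‖ ≤ (p : ℝ) ^ (-(a + 1)) := by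
  have hu : ‖x * (p : ℚ_[p]) ^ (-a)‖ ≤ 1 := by
    rw [norm_mul, Padic.norm_p_zpow, neg_neg]
    calc ‖x‖ * (p:ℝ)^a ≤ (p:ℝ)^(-a) * (p:ℝ)^a := by
          exact mul_le_mul_of_nonneg_right hx (zpow_nonneg hp0.le _)
      _ = 1 := by rw [← zpow_add₀ hp0.ne', neg_add_cancel, zpow_zero]
  set z : ℤ_[p] := ⟨x * (p : ℚ_[p]) ^ (-a), hu⟩ with hz
  have hk : z.appr 1 < p := by simpa using z.appr_lt 1
  have hspec : ‖z - (z.appr 1 : ℤ_[p])‖ ≤ (p : ℝ) ^ (-(1:ℕ) : ℤ) :=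
    (PadicInt.norm_le_pow_iff_mem_span_pow _ 1).2 (by simpa using z.appr_spec 1 )
  refine ⟨⟨z.appr 1, hk⟩, ?_⟩
  have key : x - (z.appr 1 : ℚ_[p]) * (p : ℚ_[p]) ^ a
      = ((z - (z.appr 1 : ℤ_[p]) : ℤ_[p]) : ℚ_[p]) * (p : ℚ_[p]) ^ a := by
    rw [PadicInt.coe_sub, PadicInt.coe_natCast]
    change x - _ = (x * (p : ℚ_[p]) ^ (-a) - _) * _
    rw [sub_mul, mul_assoc, ← zpow_add₀ (by exact_mod_cast (Fact.out : p.Prime).ne_zero) (-a) a,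
      neg_add_cancel, zpow_zero, mul_one]
  rw [key, norm_mul, Padic.norm_p_zpow]
  calc ‖((z - (z.appr 1 : ℤ_[p]) : ℤ_[p]) : ℚ_[p])‖ * (p:ℝ)^(-a)
      ≤ (p:ℝ)^(-(1:ℕ):ℤ) * (p:ℝ)^(-a) := by
        refine mul_le_mul_of_nonneg_right ?_ (zpow_nonneg hp0.le _)
        rw [PadicInt.padic_norm_e_of_padicInt]; exact hspec
    _ = (p:ℝ)^(-(a+1)) := by rw [← zpow_add₀ hp0.ne']; ring_nf

lemma norm_coe_fin_sub {k k' : Fin p} (h : k ≠ k') : ‖((k:ℚ_[p]) - (k':ℚ_[p]))‖ = 1 := by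
  have : ((k:ℚ_[p]) - (k':ℚ_[p])) = (((k:ℤ) - (k':ℤ) : ℤ) : ℚ_[p]) := by push_cast; ring
  rw [this]
  rcases lt_or_eq_of_le (Padic.norm_int_le_one (p := p) ((k:ℤ) - (k':ℤ))) with hlt | heq
  · exfalso
    rw [Padic.norm_intCast_lt_one_iff] at hlt
    have h1 : ((k:ℤ) - (k':ℤ)) = 0 := by
      refine Int.eq_zero_of_abs_lt_dvd hlt (abs_lt.2 ⟨?_, ?_⟩)
      · have := k.2; have := k'.2; omega
      · have := k.2; have := k'.2; omega
    exact h (Fin.ext (by omega))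
  · exact heq

lemma cb_eq_iUnion (a : ℤ) :
    cb p a = ⋃ k : Fin p, Metric.closedBall ((k : ℚ_[p]) * (p:ℚ_[p])^a) ((p:ℝ)^(-(a+1))) := by
  ext x
  simp only [mem_cb, Set.mem_iUnion, Metric.mem_closedBall, dist_eq_norm]
  constructor
  · exact fun hx => decomp hx
  · rintro ⟨k, hk⟩
    have h2 : ‖(k : ℚ_[p]) * (p:ℚ_[p])^a‖ ≤ (p:ℝ)^(-a) := by
      rw [norm_mul, Padic.norm_p_zpow]
      calc ‖(k:ℚ_[p])‖ * (p:ℝ)^(-a) ≤ 1 * (p:ℝ)^(-a) := by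
            exact mul_le_mul_of_nonneg_right (by exact_mod_cast Padic.norm_int_le_one (p := p) (k:ℤ))
              (zpow_nonneg hp0.le _)
        _ = (p:ℝ)^(-a) := one_mul _
    calc ‖x‖ = ‖(x - (k : ℚ_[p]) * (p:ℚ_[p])^a) + (k : ℚ_[p]) * (p:ℚ_[p])^a‖ := by ring_nf
      _ ≤ max ‖x - (k : ℚ_[p]) * (p:ℚ_[p])^a‖ ‖(k : ℚ_[p]) * (p:ℚ_[p])^a‖ :=
          Padic.nonarchimedean _ _
      _ ≤ (p:ℝ)^(-a) := max_le (hk.trans (zpow_le_zpow_right₀ hp1.le (by omega))) h2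

lemma pne0 : (p : ℝ≥0∞) ≠ 0 := by
  exact_mod_cast (Nat.cast_ne_zero (R := ℝ≥0∞)).2 (Fact.out : p.Prime).ne_zero

lemma pnetop : (p : ℝ≥0∞) ≠ ⊤ := natCast_ne_top p

variable (p) in
/-- A Haar measure on `ℚ_p`, normalized on the unit ball. -/
noncomputable def mu1 : Measure ℚ_[p] :=
  Measure.addHaarMeasure ⟨⟨Metric.closedBall 0 1, isCompact_closedBall 0 1⟩,
    ⟨0, interior_mono Metric.ball_subset_closedBall
      (by rw [Metric.isOpen_ball.interior_eq]; exact Metric.mem_ball_self one_pos)⟩⟩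

instance : (mu1 p).IsAddHaarMeasure := by unfold mu1; infer_instance

lemma mu1_cb_zero : mu1 p (cb p 0) = 1 := by
  have : cb p 0 = Metric.closedBall 0 1 := by rw [cb, neg_zero, zpow_zero]
  rw [this]; exact Measure.addHaarMeasure_self

lemma mu1_closedBall (c : ℚ_[p]) (r : ℝ) :
    mu1 p (Metric.closedBall c r) = mu1 p (Metric.closedBall 0 r) := by
  have h : Metric.closedBall c r = (fun y => (-c) + y) ⁻¹' Metric.closedBall 0 r := by
    ext x
    simp only [Set.mem_preimage, Metric.mem_closedBall, dist_eq_norm, sub_zero]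
    rw [neg_add_eq_sub]
  rw [h, measure_preimage_add]

lemma mu1_step (a : ℤ) : mu1 p (cb p a) = p * mu1 p (cb p (a + 1)) := by
  rw [cb_eq_iUnion a]
  rw [measure_iUnion ?_ (fun k => Metric.isClosed_closedBall.measurableSet)]
  · rw [tsum_fintype]
    have : ∀ k : Fin p, mu1 p (Metric.closedBall ((k : ℚ_[p]) * (p:ℚ_[p])^a) ((p:ℝ)^(-(a+1))))
        = mu1 p (cb p (a+1)) := fun k => mu1_closedBall _ _
    simp only [this, Finset.sum_const, Finset.card_univ, Fintype.card_fin, nsmul_eq_mul]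
  · intro k k' hkk'
    simp only [Function.onFun]
    rw [Set.disjoint_left]
    intro x hx hx'
    simp only [Metric.mem_closedBall, dist_eq_norm] at hx hx'
    have hd : ‖(k : ℚ_[p]) * (p:ℚ_[p])^a - (k' : ℚ_[p]) * (p:ℚ_[p])^a‖ = (p:ℝ)^(-a) := by
      rw [← sub_mul, norm_mul, norm_coe_fin_sub hkk', one_mul, Padic.norm_p_zpow]
    have hle : ‖(k : ℚ_[p]) * (p:ℚ_[p])^a - (k' : ℚ_[p]) * (p:ℚ_[p])^a‖ ≤ (p:ℝ)^(-(a+1)) := by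
      calc ‖(k : ℚ_[p]) * (p:ℚ_[p])^a - (k' : ℚ_[p]) * (p:ℚ_[p])^a‖
          = ‖(x - (k' : ℚ_[p]) * (p:ℚ_[p])^a) + -(x - (k : ℚ_[p]) * (p:ℚ_[p])^a)‖ := by ring_nf
        _ ≤ max ‖x - (k' : ℚ_[p]) * (p:ℚ_[p])^a‖ ‖-(x - (k : ℚ_[p]) * (p:ℚ_[p])^a)‖ :=
            Padic.nonarchimedean _ _
        _ ≤ (p:ℝ)^(-(a+1)) := max_le hx' (by rw [norm_neg]; exact hx)
    rw [hd] at hle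
    have hlt : (p:ℝ)^(-(a+1)) < (p:ℝ)^(-a) := zpow_lt_zpow_right₀ hp1 (by omega)
    linarith

lemma mu1_mul_zpow (m : ℤ) : (p:ℝ≥0∞) * (p:ℝ≥0∞)^m = (p:ℝ≥0∞)^(1+m) := by
  calc (p:ℝ≥0∞) * (p:ℝ≥0∞)^m = (p:ℝ≥0∞)^(1:ℤ) * (p:ℝ≥0∞)^m := by rw [zpow_one]
    _ = (p:ℝ≥0∞)^(1+m) := (ENNReal.zpow_add pne0 pnetop _ _).symm

lemma mu1_cb (a : ℤ) : mu1 p (cb p a) = (p:ℝ≥0∞) ^ (-a) := by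
  induction a using Int.induction_on with
  | zero => simpa using mu1_cb_zero
  | succ a ih =>
      have e1 : (p:ℝ≥0∞) * mu1 p (cb p ((a:ℤ)+1)) = (p:ℝ≥0∞)^(-(a:ℤ)) := by
        rw [← mu1_step, ih]
      have e2 : (p:ℝ≥0∞) * (p:ℝ≥0∞)^(-((a:ℤ)+1)) = (p:ℝ≥0∞)^(-(a:ℤ)) := by
        rw [mu1_mul_zpow]; congr 1; ring
      exact (ENNReal.mul_right_inj pne0 pnetop).1 (e1.trans e2.symm)
  | pred a ih =>
      have e1 := mu1_step (p := p) (-(a:ℤ) - 1)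
      rw [show (-(a:ℤ)-1+1) = -(a:ℤ) by ring, ih, mu1_mul_zpow] at e1
      rw [e1]; congr 1; ring

lemma mu1_closedBall_val (c : ℚ_[p]) (a : ℤ) :
    mu1 p (Metric.closedBall c ((p:ℝ)^(-a))) = (p:ℝ≥0∞) ^ (-a) := by
  rw [mu1_closedBall, ← cb, mu1_cb]

/-- the single-coordinate characterization: `ac(x)=1` and `v(x)=m` iff `x` lies in the closed
ball of radius `p^{-(m+1)}` around `p^m`. -/
lemma ball_char {m : ℤ} {x : ℚ_[p]} :
    (acIsOne p 1 x ∧ x.valuation = m) ↔ ‖x - (p:ℚ_[p])^m‖ ≤ (p:ℝ)^(-(m+1)) := by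
  constructor
  · rintro ⟨⟨hx0, hac⟩, hv⟩
    rw [hv] at hac
    have key : x - (p:ℚ_[p])^m = (x * (p:ℚ_[p])^(-m) - 1) * (p:ℚ_[p])^m := by
      rw [sub_mul, mul_assoc, ← zpow_add₀ (by exact_mod_cast (Fact.out : p.Prime).ne_zero) (-m) m,
        neg_add_cancel, zpow_zero, mul_one, one_mul]
    rw [key, norm_mul, Padic.norm_p_zpow]
    calc ‖x * (p:ℚ_[p])^(-m) - 1‖ * (p:ℝ)^(-m) ≤ (p:ℝ)^(-(1:ℕ):ℤ) * (p:ℝ)^(-m) :=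
          mul_le_mul_of_nonneg_right hac (zpow_nonneg hp0.le _)
      _ = (p:ℝ)^(-(m+1)) := by rw [← zpow_add₀ hp0.ne']; congr 1; push_cast; ring
  · intro h
    have hnormpm : ‖(p:ℚ_[p])^m‖ = (p:ℝ)^(-m) := Padic.norm_p_zpow m
    have hlt : (p:ℝ)^(-(m+1)) < (p:ℝ)^(-m) := zpow_lt_zpow_right₀ hp1 (by omega)
    have hxnorm : ‖x‖ = (p:ℝ)^(-m) := by
      rcases eq_or_ne (x - (p:ℚ_[p])^m) 0 with h0 | h0
      · rw [show x = (p:ℚ_[p])^m from by linear_combination h0, hnormpm]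
      · have hne : ‖x - (p:ℚ_[p])^m‖ ≠ ‖(p:ℚ_[p])^m‖ := by
          rw [hnormpm]; exact ne_of_lt (lt_of_le_of_lt h hlt)
        have := Padic.add_eq_max_of_ne (q := x - (p:ℚ_[p])^m) (r := (p:ℚ_[p])^m) hne
        rw [sub_add_cancel] at this
        rw [this, hnormpm, max_eq_right (le_of_lt (lt_of_le_of_lt h (hnormpm ▸ hlt)))]
    have hx0 : x ≠ 0 := by
      intro h0
      rw [h0, norm_zero] at hxnorm
      exact (zpow_pos hp0 (-m)).ne' hxnorm.symm
    have hv : x.valuation = m := by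
      have := Padic.norm_eq_zpow_neg_valuation hx0
      rw [hxnorm] at this
      have := (zpow_right_inj₀ hp0 (ne_of_gt hp1)).1 this.symm
      omega
    refine ⟨⟨hx0, ?_⟩, hv⟩
    rw [hv]
    have key : x * (p:ℚ_[p])^(-m) - 1 = (x - (p:ℚ_[p])^m) * (p:ℚ_[p])^(-m) := by
      have hpm : (p:ℚ_[p])^m * (p:ℚ_[p])^(-m) = 1 := by
        rw [← zpow_add₀ (by exact_mod_cast (Fact.out : p.Prime).ne_zero : (p:ℚ_[p]) ≠ 0) m (-m),
          add_neg_cancel, zpow_zero]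
      rw [sub_mul, hpm]
    rw [key, norm_mul, Padic.norm_p_zpow, neg_neg]
    calc ‖x - (p:ℚ_[p])^m‖ * (p:ℝ)^m ≤ (p:ℝ)^(-(m+1)) * (p:ℝ)^m :=
          mul_le_mul_of_nonneg_right h (zpow_nonneg hp0.le _)
      _ = (p:ℝ)^(-(1:ℕ):ℤ) := by rw [← zpow_add₀ hp0.ne']; congr 1; push_cast; ring

lemma prod_zpow_enn {ι : Type*} (s : Finset ι) (f : ι → ℤ) :
    ∏ i ∈ s, (p:ℝ≥0∞)^(f i) = (p:ℝ≥0∞)^(∑ i ∈ s, f i) := by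
  classical
  induction s using Finset.cons_induction with
  | empty => simp
  | cons i s hi ih => rw [Finset.prod_cons, Finset.sum_cons, ih, ← ENNReal.zpow_add pne0 pnetop]

lemma mu1_unit : mu1 p (Metric.closedBall (0:ℚ_[p]) 1) = 1 := Measure.addHaarMeasure_self

/-- The exponent vector attached to `lam`. -/
noncomputable def evec (n : ℕ) (ν : (Fin n → ℤ) → ℤ) (lam : Fin n → ℤ) : Fin (n+1) → ℤ :=
  Fin.snoc lam (-(n:ℤ) - 1 - ν lam - ∑ i, lam i)

variable (p) in
/-- The polydisc with exponent vector `e`. -/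
noncomputable def Sball {n : ℕ} (e : Fin (n+1) → ℤ) : Set (QV p (n+1)) :=
  Set.pi Set.univ fun i => Metric.closedBall ((p:ℚ_[p])^(e i)) ((p:ℝ)^(-(e i + 1)))

lemma mem_Sball {n : ℕ} {e : Fin (n+1) → ℤ} {z : QV p (n+1)} :
    z ∈ Sball p e ↔ ∀ i, acIsOne p 1 (z i) ∧ (z i).valuation = e i := by
  simp only [Sball, Set.mem_pi, Set.mem_univ, forall_true_left, Metric.mem_closedBall,
    dist_eq_norm]
  exact forall_congr' fun i => ball_char.symm

lemma Pnu0_eq {n : ℕ} (Λ : Set (Fin n → ℤ)) (ν : (Fin n → ℤ) → ℤ) :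
    Pnu0 p Λ ν = ⋃ lam : Λ, Sball p (evec n ν (lam : Fin n → ℤ)) := by
  ext z
  simp only [Pnu0, Set.mem_setOf_eq, Set.mem_iUnion, mem_Sball]
  constructor
  · rintro ⟨hac, hΛ, hlast, hval⟩
    refine ⟨⟨vvec p (z ∘ Fin.castSucc), hΛ⟩, ?_⟩
    intro i
    induction i using Fin.lastCases with
    | last => exact ⟨hlast, by rw [hval]; simp [evec, Fin.snoc_last, vvec]⟩
    | cast i => exact ⟨hac i, by simp [evec, Fin.snoc_castSucc, vvec]⟩
  · rintro ⟨⟨lam, hΛ⟩, h⟩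
    have hvv : vvec p (z ∘ Fin.castSucc) = lam := by
      funext i
      have := (h (Fin.castSucc i)).2
      simpa [evec, Fin.snoc_castSucc, vvec] using this
    refine ⟨fun i => (h (Fin.castSucc i)).1, hvv ▸ hΛ, (h (Fin.last n)).1, ?_⟩
    have hl := (h (Fin.last n)).2
    rw [hl]
    simp only [evec, Fin.snoc_last, hvv]
    congr 1
    exact (Finset.sum_congr rfl fun i _ => by rw [← hvv]; rfl).symm

lemma sum_evec {n : ℕ} (ν : (Fin n → ℤ) → ℤ) (lam : Fin n → ℤ) :
    ∑ i : Fin (n+1), -(evec n ν lam i + 1) = ν lam := by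
  have h1 : ∑ i : Fin (n+1), evec n ν lam i
      = (∑ i : Fin n, lam i) + (-(n:ℤ) - 1 - ν lam - ∑ i : Fin n, lam i) := by
    simpa [evec] using Fin.sum_snoc (M := ℤ) (-(n:ℤ) - 1 - ν lam - ∑ i : Fin n, lam i) lam
  have h2 : ∑ i : Fin (n+1), -(evec n ν lam i + 1)
      = -(∑ i : Fin (n+1), evec n ν lam i) - (n+1 : ℕ) := by
    simp [neg_add, Finset.sum_add_distrib, Finset.sum_neg_distrib, Finset.card_univ]
    ring
  rw [h2, h1]; push_cast; ring

instance : SigmaFinite (mu1 p) := by infer_instance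

lemma mu_pi_Sball {n : ℕ} (ν : (Fin n → ℤ) → ℤ) (lam : Fin n → ℤ) :
    Measure.pi (fun _ : Fin (n+1) => mu1 p) (Sball p (evec n ν lam)) = (p:ℝ≥0∞) ^ (ν lam) := by
  rw [Sball, Measure.pi_pi]
  have h : ∀ i : Fin (n+1), mu1 p (Metric.closedBall ((p:ℚ_[p])^(evec n ν lam i))
      ((p:ℝ)^(-(evec n ν lam i + 1)))) = (p:ℝ≥0∞)^(-(evec n ν lam i + 1)) :=
    fun i => mu1_closedBall_val _ _
  simp only [h]
  rw [prod_zpow_enn, sum_evec]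

lemma Sball_disjoint {n : ℕ} (ν : (Fin n → ℤ) → ℤ) {lam lam' : Fin n → ℤ} (h : lam ≠ lam') :
    Disjoint (Sball p (evec n ν lam)) (Sball p (evec n ν lam')) := by
  rw [Set.disjoint_left]
  intro z hz hz'
  rw [mem_Sball] at hz hz'
  apply h
  funext i
  have h1 := (hz (Fin.castSucc i)).2
  have h2 := (hz' (Fin.castSucc i)).2
  rw [h1] at h2
  simpa [evec, Fin.snoc_castSucc] using h2

/-- `P(Λ,ν) ⊆ ℚ_p^{n+1}` is a Borel set and `μ(P(Λ,ν)) = ∑_{λ ∈ Λ} p^{ν(λ)}` in `[0,∞]`, for the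
Haar measure `μ` on `ℚ_p^{n+1}` normalized by `μ(ℤ_p^{n+1}) = 1`. -/
theorem measurableSet_and_measure_Pnu
    (p : ℕ) [Fact p.Prime] (n : ℕ) (hn : 1 ≤ n)
    (Λ : Set (Fin n → ℤ)) (ν : (Fin n → ℤ) → ℤ)
    (μ : Measure (QV p (n + 1))) [μ.IsAddHaarMeasure]
    (hnorm : μ (disc p (n + 1)) = 1) :
    MeasurableSet (Pnu0 p Λ ν) ∧
      μ (Pnu0 p Λ ν) = ∑' lam : Λ, (p : ℝ≥0∞) ^ (ν (lam : Fin n → ℤ)) := by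
  classical
  set μ₀ : Measure (QV p (n+1)) := Measure.pi (fun _ => mu1 p) with hμ₀
  haveI : μ₀.IsAddHaarMeasure := by rw [hμ₀]; infer_instance
  have hdisc : disc p (n+1) = Set.pi Set.univ (fun _ : Fin (n+1) => Metric.closedBall (0:ℚ_[p]) 1) := by
    ext z; simp [disc, Metric.mem_closedBall, dist_zero_right]
  have hμ₀disc : μ₀ (disc p (n+1)) = 1 := by
    rw [hdisc, hμ₀, Measure.pi_pi]
    simp [mu1_unit]
  have huniq := Measure.isAddLeftInvariant_eq_smul μ μ₀
  have hc : (Measure.addHaarScalarFactor μ μ₀ : ℝ≥0∞) = 1 := by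
    rw [huniq] at hnorm
    rw [Measure.smul_apply, hμ₀disc, ENNReal.smul_def, smul_eq_mul, mul_one] at hnorm
    exact hnorm
  have hμeq : μ = μ₀ := by
    rw [huniq, show Measure.addHaarScalarFactor μ μ₀ = 1 from by exact_mod_cast hc, one_smul]
  haveI : Countable ↥Λ := (Set.to_countable Λ).to_subtype
  have hSmeas : ∀ lam : Λ, MeasurableSet (Sball p (evec n ν (lam : Fin n → ℤ))) :=
    fun lam => MeasurableSet.univ_pi fun i => measurableSet_closedBall
  have hdisj : Pairwise (Function.onFun Disjoint
      fun lam : Λ => Sball p (evec n ν (lam : Fin n → ℤ))) := by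
    intro lam lam' hne
    exact Sball_disjoint ν (fun hh => hne (Subtype.ext hh))
  constructor
  · rw [Pnu0_eq]
    exact MeasurableSet.iUnion fun lam => hSmeas lam
  · rw [hμeq, Pnu0_eq, measure_iUnion hdisj hSmeas]
    exact tsum_congr fun lam => mu_pi_Sball ν (lam : Fin n → ℤ)

end KZ
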